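/- Shifted Shannon–Whittaker formula: let f : ℝ → ℂ be an integrable function supported in [−1/2, 1/2] (with f ∈ L²). Then for every ξ ∈ ℝ, f̂(ξ) = Σ_{k ∈ ℤ} f̂(k − 1/2) · sin(π(ξ − k + 1/2)) / (π(ξ − k + 1/2)), where the term with ξ = k − 1/2 is interpreted as f̂(k − 1/2). -/

import Mathlib

open MeasureTheory FourierTransform Real

open Complex AddCircle in
theorem stmt5 (f : ℝ → ℂ) (hf1 : Integrable f)
    (hf2 : MemLp f 2 (volume : Measure ℝ))
    (hsupp : Function.support f ⊆ Set.Icc (-(1 / 2) : ℝ) (1 / 2)) :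
    ∀ ξ : ℝ,
      HasSum (fun k : ℤ =>
          𝓕 f ((k : ℝ) - 1 / 2) *
            (if ξ = (k : ℝ) - 1 / 2 then 1 else
              (Real.sin (π * (ξ - (k : ℝ) + 1 / 2)) / (π * (ξ - (k : ℝ) + 1 / 2)) : ℝ)))
        (𝓕 f ξ) := by
  intro ξ
  have hπ : (0:ℝ) < π := Real.pi_pos
  set a : ℝ := -(1/2) with ha
  have ha1 : a + 1 = (1/2:ℝ) := by norm_num [ha]
  haveI : Fact ((0:ℝ) < 1) := ⟨one_pos⟩
  -- measurable representative
  set f' : ℝ → ℂ := hf1.1.mk f with hf'def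
  have hf'meas : StronglyMeasurable f' := hf1.1.stronglyMeasurable_mk
  have hff' : f =ᵐ[volume] f' := hf1.1.ae_eq_mk
  have hf'2 : MemLp f' 2 volume := hf2.ae_eq hff'
  set h : ℝ → ℂ := fun x => f' x * Complex.exp ((π : ℂ) * Complex.I * x) with hh
  set w : ℝ → ℂ := fun x =>
    Complex.exp (((-(2 * π * (ξ + 1/2)) : ℝ) : ℂ) * Complex.I * x) with hw
  set H := AddCircle.liftIoc (1:ℝ) a h with hHdef
  set W := AddCircle.liftIoc (1:ℝ) a w with hWdef
  have haar1 : (haarAddCircle : Measure (AddCircle (1:ℝ))) = volume := by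
    rw [AddCircle.volume_eq_smul_haarAddCircle]; simp
  have intCirc : ∀ G : AddCircle (1:ℝ) → ℂ,
      ∫ t, G t ∂(haarAddCircle) = ∫ x in Set.Ioc a (1/2 : ℝ), G (x : AddCircle (1:ℝ)) := by
    intro G
    rw [haar1, ← AddCircle.integral_preimage (1:ℝ) a G, ha1]
  have measLift : ∀ g : ℝ → ℂ, Measurable g → Measurable (AddCircle.liftIoc (1:ℝ) a g) := by
    intro g hg
    have : AddCircle.liftIoc (1:ℝ) a g =
        (fun y : Set.Ioc a (a+1) => g y) ∘ (AddCircle.measurableEquivIoc (1:ℝ) a) := rfl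
    rw [this]
    exact (hg.comp measurable_subtype_coe).comp (AddCircle.measurableEquivIoc (1:ℝ) a).measurable
  have hwcont : Continuous w := by
    exact (continuous_const.mul Complex.continuous_ofReal).cexp
  have hhmeas : Measurable h := by
    exact hf'meas.measurable.mul ((continuous_const.mul Complex.continuous_ofReal).cexp).measurable
  have hWmeas : Measurable W := measLift w hwcont.measurable
  have hHmeas : Measurable H := measLift h hhmeas
  have hwnorm : ∀ x : ℝ, ‖w x‖ = 1 := by
    intro x
    have : (((-(2 * π * (ξ + 1/2)) : ℝ) : ℂ)) * Complex.I * x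
        = ((-(2 * π * (ξ + 1/2)) * x : ℝ) : ℂ) * Complex.I := by push_cast; ring
    rw [hw]; dsimp only; rw [this, Complex.norm_exp_ofReal_mul_I]
  have hWnorm : ∀ t, ‖W t‖ = 1 := fun t => hwnorm _
  have hWc2 : MemLp (fun t => (starRingEnd ℂ) (W t)) 2 haarAddCircle := by
    refine MemLp.of_bound ((Complex.continuous_conj.measurable.comp hWmeas).aestronglyMeasurable)
      1 (Filter.Eventually.of_forall fun t => ?_)
    rw [RCLike.norm_conj]; exact (hWnorm t).le
  have hH2 : MemLp H 2 haarAddCircle := by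
    rw [haar1, ← (AddCircle.measurePreserving_mk (1:ℝ) a).map_eq,
      memLp_map_measure_iff hHmeas.aestronglyMeasurable AddCircle.measurable_mk'.aemeasurable]
    refine MemLp.of_le (hf'2.restrict _)
      ((hHmeas.comp AddCircle.measurable_mk').aestronglyMeasurable) ?_
    filter_upwards [ae_restrict_mem measurableSet_Ioc] with x hx
    rw [Function.comp_apply, hHdef, AddCircle.liftIoc_coe_apply hx]
    have : ((π:ℂ) * Complex.I * x) = ((π * x : ℝ) : ℂ) * Complex.I := by push_cast; ring
    rw [hh]; dsimp only
    rw [norm_mul, this, Complex.norm_exp_ofReal_mul_I, mul_one]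
  set HL : Lp ℂ 2 haarAddCircle := hH2.toLp H with hHL
  set v : Lp ℂ 2 haarAddCircle := hWc2.toLp _ with hv
  -- support reduction for Fourier integrals
  have suppInt : ∀ ξ' : ℝ,
      𝓕 f ξ' = ∫ x in Set.Ioc a (1/2:ℝ), Complex.exp (↑(-2 * π * x * ξ') * Complex.I) • f' x := by
    intro ξ'
    rw [Real.fourier_real_eq_integral_exp_smul]
    rw [← MeasureTheory.setIntegral_eq_integral_of_forall_compl_eq_zero
      (s := Set.Icc a (1/2:ℝ)) (fun x hx => ?_), MeasureTheory.integral_Icc_eq_integral_Ioc]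
    · refine integral_congr_ae ?_
      filter_upwards [ae_restrict_of_ae hff'] with x hx
      rw [hx]
    · have : f x = 0 := by
        by_contra hfx
        exact hx (by simpa [ha] using hsupp (Function.mem_support.mpr hfx))
      rw [this, smul_zero]
  -- Fourier coefficients of H
  have hcoeffH : ∀ n : ℤ, fourierCoeff H n = 𝓕 f ((n:ℝ) - 1/2) := by
    intro n
    have e1 : fourierCoeff H n
        = ∫ x in Set.Ioc a (1/2:ℝ), fourier (-n) ((x : ℝ) : AddCircle (1:ℝ)) • H ((x:ℝ) : AddCircle (1:ℝ)) :=
      intCirc _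
    rw [e1, suppInt ((n:ℝ) - 1/2)]
    refine setIntegral_congr_fun measurableSet_Ioc fun x hx => ?_
    have hx' : x ∈ Set.Ioc a (a + 1) := by rwa [ha1]
    rw [hHdef, AddCircle.liftIoc_coe_apply hx', fourier_coe_apply]
    rw [hh]; dsimp only
    rw [smul_eq_mul, smul_eq_mul, mul_left_comm, ← Complex.exp_add, mul_comm _ (f' x)]
    congr 2
    push_cast
    ring
  have hcoeffHL : ∀ n : ℤ, fourierCoeff (HL : AddCircle (1:ℝ) → ℂ) n = fourierCoeff H n := by
    intro n
    refine integral_congr_ae ?_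
    filter_upwards [hH2.coeFn_toLp] with t ht
    rw [ht]
  -- inner products
  have hvW : (v : AddCircle (1:ℝ) → ℂ) =ᵐ[haarAddCircle] fun t => (starRingEnd ℂ) (W t) :=
    hWc2.coeFn_toLp
  have innerRHS : (inner ℂ v HL : ℂ) = 𝓕 f ξ := by
    rw [MeasureTheory.L2.inner_def]
    have e0 : (fun t => (inner ℂ (v t) (HL t) : ℂ)) =ᵐ[haarAddCircle]
        fun t => W t * H t := by
      filter_upwards [hvW, hH2.coeFn_toLp] with t h1 h2
      rw [RCLike.inner_apply, h1, h2, starRingEnd_self_apply, mul_comm]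
    rw [integral_congr_ae e0, intCirc, suppInt ξ]
    refine setIntegral_congr_fun measurableSet_Ioc fun x hx => ?_
    have hx' : x ∈ Set.Ioc a (a + 1) := by rwa [ha1]
    rw [hWdef, hHdef, AddCircle.liftIoc_coe_apply hx', AddCircle.liftIoc_coe_apply hx']
    rw [hw, hh]; dsimp only
    rw [smul_eq_mul, mul_left_comm, ← Complex.exp_add, mul_comm _ (f' x)]
    congr 2
    push_cast
    ring
  have innerA : ∀ n : ℤ, (inner ℂ v (fourierLp 2 n : Lp ℂ 2 haarAddCircle) : ℂ) =
      (if ξ = (n : ℝ) - 1 / 2 then 1 else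
        ((Real.sin (π * (ξ - (n:ℝ) + 1/2)) / (π * (ξ - (n:ℝ) + 1/2)) : ℝ) : ℂ)) := by
    intro n
    set c : ℝ := (n:ℝ) - ξ - 1/2 with hc
    rw [MeasureTheory.L2.inner_def]
    have e0 : (fun t => (inner ℂ (v t) ((fourierLp 2 n : Lp ℂ 2 haarAddCircle) t) : ℂ))
        =ᵐ[haarAddCircle] fun t => W t * fourier n t := by
      filter_upwards [hvW, coeFn_fourierLp 2 n] with t h1 h2
      rw [RCLike.inner_apply, h1, h2, starRingEnd_self_apply, mul_comm]
    rw [integral_congr_ae e0, intCirc]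
    have e1 : ∫ x in Set.Ioc a (1/2:ℝ), W ((x:ℝ) : AddCircle (1:ℝ)) * fourier n ((x:ℝ) : AddCircle (1:ℝ))
        = ∫ x in Set.Ioc a (1/2:ℝ), Complex.exp ((((2 * π * c : ℝ)) : ℂ) * Complex.I * x) := by
      refine setIntegral_congr_fun measurableSet_Ioc fun x hx => ?_
      have hx' : x ∈ Set.Ioc a (a + 1) := by rwa [ha1]
      rw [hWdef, AddCircle.liftIoc_coe_apply hx', fourier_coe_apply]
      rw [hw]; dsimp only
      rw [← Complex.exp_add]
      congr 1
      push_cast [hc]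
      ring
    rw [e1, ← intervalIntegral.integral_of_le (by norm_num [ha] : a ≤ (1/2:ℝ))]
    by_cases hc0 : c = 0
    · have hξ : ξ = (n:ℝ) - 1/2 := by rw [hc] at hc0; linarith
      rw [if_pos hξ]
      simp only [hc0]
      norm_num [ha]
    · have hξ : ¬ (ξ = (n:ℝ) - 1/2) := by
        intro hcon; apply hc0; rw [hc, hcon]; ring
      rw [if_neg hξ]
      have hC : (((2 * π * c : ℝ)) : ℂ) * Complex.I ≠ 0 := by
        apply mul_ne_zero _ Complex.I_ne_zero
        exact_mod_cast mul_ne_zero (by positivity) hc0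
      have : ∀ x : ℝ, ((((2 * π * c : ℝ)) : ℂ) * Complex.I) * (x:ℂ)
          = ((((2 * π * c : ℝ)) : ℂ) * Complex.I) * (x:ℂ) := fun _ => rfl
      rw [show (fun x : ℝ => Complex.exp ((((2 * π * c : ℝ)) : ℂ) * Complex.I * x))
          = fun x : ℝ => Complex.exp (((((2 * π * c : ℝ)) : ℂ) * Complex.I) * (x:ℂ)) from rfl]
      rw [integral_exp_mul_complex hC]
      have hb : ((((2 * π * c : ℝ)) : ℂ) * Complex.I) * ((1/2 : ℝ) : ℂ)
          = ((π * c : ℝ) : ℂ) * Complex.I := by push_cast; ring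
      have hA : ((((2 * π * c : ℝ)) : ℂ) * Complex.I) * ((a : ℝ) : ℂ)
          = (-(π * c : ℝ) : ℂ) * Complex.I := by push_cast [ha]; ring
      rw [hb, hA]
      have h2 : π * (ξ - (n:ℝ) + 1/2) = -(π * c) := by rw [hc]; ring
      rw [h2, Real.sin_neg]
      have hπc : ((π * c : ℝ) : ℂ) ≠ 0 := by
        exact_mod_cast mul_ne_zero hπ.ne' hc0
      rw [Complex.exp_mul_I, Complex.exp_mul_I]
      push_cast
      push_cast at hπc
      rw [Complex.cos_neg, Complex.sin_neg, neg_div_neg_eq]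
      rw [show Complex.cos ((π:ℂ) * c) + Complex.sin ((π:ℂ) * c) * Complex.I -
          (Complex.cos ((π:ℂ) * c) + -Complex.sin ((π:ℂ) * c) * Complex.I)
          = 2 * Complex.sin ((π:ℂ) * c) * Complex.I from by ring]
      have hπ' : ((π:ℝ):ℂ) ≠ 0 := Complex.ofReal_ne_zero.mpr hπ.ne'
      have hc' : ((c:ℝ):ℂ) ≠ 0 := Complex.ofReal_ne_zero.mpr hc0
      rw [div_eq_div_iff (mul_ne_zero (mul_ne_zero (mul_ne_zero two_ne_zero hπ') hc')
        Complex.I_ne_zero) (mul_ne_zero hπ' hc')]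
      ring
  -- assemble
  have S := hasSum_fourier_series_L2 HL
  have S2 := (innerSL ℂ v).hasSum S
  simp only [innerSL_apply_apply, inner_smul_right] at S2
  rw [innerRHS] at S2
  refine S2.congr_fun ?_
  intro n
  rw [hcoeffHL, hcoeffH, innerA]
  split_ifs <;> simp
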